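/- For every integer k ≥ 2, the geometric realization of the Vietoris–Rips complex VR(ℤ²;k), where ℤ² is equipped with the ℓ¹ metric, is contractible. -/
import Mathlib


/-- The ℓ¹ metric on `ℤ × ℤ`. -/
def dZ2 (x y : ℤ × ℤ) : ℤ := |x.1 - y.1| + |x.2 - y.2|

/-- `σ` is a simplex of the Vietoris–Rips complex `VR(V; k)` of the metric space `V`
with (integer-valued) distance `d`: a finite nonempty subset of diameter at most `k`. -/
def IsVRSimplex {V : Type*} (d : V → V → ℤ) (k : ℤ) (σ : Finset V) : Prop :=
  σ.Nonempty ∧ ∀ x ∈ σ, ∀ y ∈ σ, d x y ≤ k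

/-- The geometric realization of the abstract simplicial complex whose simplices are
(the nonempty subsets of) the members of `S`: the set of finitely supported probability
vectors on the vertex set whose support lies in some member of `S`, topologized as a
subspace of `V → ℝ`. -/
def Realization {V : Type*} (S : Set (Finset V)) : Set (V → ℝ) :=
  {f | ∃ σ ∈ S, (∀ v, v ∉ σ → f v = 0) ∧ (∀ v, 0 ≤ f v) ∧ σ.sum f = 1}


namespace VRZ2

def sg (a : ℤ) : ℤ := if 0 < a then 1 else if a < 0 then -1 else 0
def phi (v : ℤ × ℤ) : ℤ × ℤ := (v.1 - sg v.1, v.2 - sg v.2)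
def nrm (v : ℤ × ℤ) : ℕ := v.1.natAbs + v.2.natAbs

lemma nrm_phi_lt {v : ℤ × ℤ} (h : nrm v ≠ 0) : nrm (phi v) < nrm v := by
  simp only [nrm, phi, sg] at *
  split_ifs <;> omega

def psi (n : ℕ) (v : ℤ × ℤ) : ℤ × ℤ :=
  if nrm v ≤ n then v else psi n (phi v)
termination_by nrm v
decreasing_by exact nrm_phi_lt (by omega)

lemma psi_of_le {n : ℕ} {v : ℤ × ℤ} (h : nrm v ≤ n) : psi n v = v := by
  rw [psi, if_pos h]

lemma nrm_psi_le (n : ℕ) (v : ℤ × ℤ) : nrm (psi n v) ≤ n := by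
  by_cases h : nrm v ≤ n
  · rw [psi_of_le h]; exact h
  · rw [psi, if_neg h]
    exact nrm_psi_le n (phi v)
termination_by nrm v
decreasing_by exact nrm_phi_lt (by omega)

lemma dZ2_comm (x y : ℤ × ℤ) : dZ2 x y = dZ2 y x := by
  simp [dZ2, abs_sub_comm]

lemma claimA {k : ℤ} (hk : 2 ≤ k) {x y : ℤ × ℤ} (hn : nrm x ≤ nrm y)
    (hd : dZ2 x y ≤ k) : dZ2 x (phi y) ≤ k := by
  obtain ⟨a, b⟩ := x
  obtain ⟨c, d⟩ := y
  simp only [dZ2, phi, sg, nrm, Int.abs_eq_natAbs] at *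
  split_ifs <;> omega

lemma claimB {k : ℤ} (hk : 2 ≤ k) {x y : ℤ × ℤ} (hn : nrm x = nrm y)
    (hd : dZ2 x y ≤ k) : dZ2 (phi x) (phi y) ≤ k := by
  obtain ⟨a, b⟩ := x
  obtain ⟨c, d⟩ := y
  simp only [dZ2, phi, sg, nrm, Int.abs_eq_natAbs] at *
  split_ifs <;> omega

lemma psi_step (n : ℕ) (v : ℤ × ℤ) :
    psi n v = if nrm (psi (n+1) v) ≤ n then psi (n+1) v else phi (psi (n+1) v) := by
  by_cases h : nrm v ≤ n
  · rw [psi_of_le h, psi_of_le (by omega), if_pos h]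
  · by_cases h2 : nrm v ≤ n + 1
    · rw [psi_of_le h2, if_neg h, psi, if_neg h]
      have : nrm (phi v) ≤ n := by have := nrm_phi_lt (v := v) (by omega); omega
      rw [psi_of_le this]
    · rw [psi, if_neg h]
      conv_rhs => rw [psi, if_neg h2]
      exact psi_step n (phi v)
termination_by nrm v
decreasing_by exact nrm_phi_lt (by omega)

lemma psi_descend {k : ℤ} (hk : 2 ≤ k) {x y : ℤ × ℤ} {n : ℕ}
    (h : dZ2 (psi (n+1) x) (psi (n+1) y) ≤ k) : dZ2 (psi n x) (psi n y) ≤ k := by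
  have hx := nrm_psi_le (n+1) x
  have hy := nrm_psi_le (n+1) y
  rw [psi_step n x, psi_step n y]
  split_ifs with h1 h2 h2
  · exact h
  · exact claimA hk (by omega) h
  · rw [dZ2_comm]; exact claimA hk (by omega) (by rwa [dZ2_comm])
  · exact claimB hk (by omega) h

lemma psi_dist {k : ℤ} (hk : 2 ≤ k) {x y : ℤ × ℤ} (h : dZ2 x y ≤ k) (n : ℕ) :
    dZ2 (psi n x) (psi n y) ≤ k := by
  suffices H : ∀ j n, max (nrm x) (nrm y) ≤ n + j → dZ2 (psi n x) (psi n y) ≤ k by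
    exact H (max (nrm x) (nrm y)) n (by omega)
  intro j
  induction j with
  | zero => intro n hn; rw [psi_of_le (by omega), psi_of_le (by omega)]; exact h
  | succ j ih => intro n hn
                 exact psi_descend hk (ih (n+1) (by omega))

lemma psi_cross {k : ℤ} (hk : 2 ≤ k) {x y : ℤ × ℤ} (h : dZ2 x y ≤ k) (n : ℕ) :
    dZ2 (psi n x) (psi (n+1) y) ≤ k := by
  have h1 := psi_dist hk h (n+1)
  have hx := nrm_psi_le (n+1) x
  have hy := nrm_psi_le (n+1) y
  rw [psi_step n x]
  split_ifs with h2
  · exact h1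
  · rw [dZ2_comm]
    exact claimA hk (by omega) (by rwa [dZ2_comm])

lemma psi_zero (w : ℤ × ℤ) : psi 0 w = ((0 : ℤ), (0 : ℤ)) := by
  have h := nrm_psi_le 0 w
  have h1 : (psi 0 w).1.natAbs = 0 ∧ (psi 0 w).2.natAbs = 0 := by
    simp only [nrm] at h; omega
  have := Int.natAbs_eq_zero.1 h1.1
  have := Int.natAbs_eq_zero.1 h1.2
  exact Prod.ext (by assumption) (by assumption)

/-! ### The pushforward and the homotopy formula -/

noncomputable def push (n : ℕ) (f : ℤ × ℤ → ℝ) (v : ℤ × ℤ) : ℝ :=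
  ∑' w : ℤ × ℤ, if psi n w = v then f w else 0

noncomputable def theta (n : ℕ) (t : ℝ) : ℝ :=
  min 1 (max 0 ((n : ℝ) * ((n : ℝ) + 1) * t - (n : ℝ)))

noncomputable def Hfun (f : ℤ × ℤ → ℝ) (t : ℝ) (v : ℤ × ℤ) : ℝ :=
  f v + ∑' n : ℕ, theta (n+1) t * (push n f v - push (n+1) f v)

variable {f : ℤ × ℤ → ℝ} {σ : Finset (ℤ × ℤ)}

lemma push_eq_sum (hs : ∀ w, w ∉ σ → f w = 0) (n : ℕ) (v : ℤ × ℤ) :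
    push n f v = ∑ w ∈ σ, if psi n w = v then f w else 0 := by
  refine tsum_eq_sum ?_
  intro w hw
  simp [hs w hw]

lemma push_stab {M : ℕ} (hs : ∀ w, w ∉ σ → f w = 0) (hM : ∀ w ∈ σ, nrm w ≤ M)
    {n : ℕ} (hn : M ≤ n) (v : ℤ × ℤ) : push n f v = f v := by
  rw [push_eq_sum hs]
  have : ∀ w ∈ σ, (if psi n w = v then f w else 0) = (if w = v then f w else 0) := by
    intro w hw
    rw [psi_of_le (le_trans (hM w hw) hn)]
  rw [Finset.sum_congr rfl this, Finset.sum_ite_eq' σ v f]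
  by_cases hv : v ∈ σ
  · rw [if_pos hv]
  · rw [if_neg hv, hs v hv]

lemma Hfun_formula {M : ℕ} (hs : ∀ w, w ∉ σ → f w = 0) (hM : ∀ w ∈ σ, nrm w ≤ M)
    (t : ℝ) (v : ℤ × ℤ) :
    Hfun f t v = f v + ∑ n ∈ Finset.range M,
      theta (n+1) t * (push n f v - push (n+1) f v) := by
  unfold Hfun
  congr 1
  refine tsum_eq_sum ?_
  intro n hn
  have hn' : M ≤ n := by simpa using hn
  rw [push_stab hs hM hn', push_stab hs hM (by omega)]
  ring

lemma theta_zero (n : ℕ) : theta (n+1) 0 = 0 := by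
  unfold theta
  push_cast
  rw [max_eq_left (by nlinarith [Nat.cast_nonneg (α := ℝ) n]),
    min_eq_right (by norm_num)]

lemma Hfun_zero (v : ℤ × ℤ) : Hfun f 0 v = f v := by
  unfold Hfun
  have : ∀ n : ℕ, theta (n+1) 0 * (push n f v - push (n+1) f v) = 0 := by
    intro n; rw [theta_zero]; ring
  rw [tsum_congr this, tsum_zero]; ring

lemma theta_one (n : ℕ) : theta (n+1) 1 = 1 := by
  unfold theta
  push_cast
  rw [max_eq_right, min_eq_left] <;> nlinarith [Nat.cast_nonneg (α := ℝ) n]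

lemma Hfun_one (hs : ∀ w, w ∉ σ → f w = 0) (hsum : σ.sum f = 1) (v : ℤ × ℤ) :
    Hfun f 1 v = if v = ((0:ℤ), (0:ℤ)) then 1 else 0 := by
  set M := σ.sup nrm with hMdef
  have hM : ∀ w ∈ σ, nrm w ≤ M := fun w hw => Finset.le_sup hw
  rw [Hfun_formula hs hM]
  have : ∀ n ∈ Finset.range M, theta (n+1) 1 * (push n f v - push (n+1) f v)
      = push n f v - push (n+1) f v := by
    intro n _; rw [theta_one]; ring
  rw [Finset.sum_congr rfl this, Finset.sum_range_sub' (fun n => push n f v),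
    push_stab hs hM (le_refl M)]
  have hp0 : push 0 f v = if v = ((0:ℤ),(0:ℤ)) then 1 else 0 := by
    rw [push_eq_sum hs]
    by_cases hv : v = ((0:ℤ),(0:ℤ))
    · subst hv
      rw [if_pos rfl, ← hsum]
      refine Finset.sum_congr rfl ?_
      intro w _; rw [if_pos (psi_zero w)]
    · rw [if_neg hv]
      refine Finset.sum_eq_zero ?_
      intro w _
      rw [if_neg (by rw [psi_zero w]; exact fun h => hv h.symm)]
  rw [hp0]; ring


noncomputable def lam (m : ℕ) (t : ℝ) : ℝ := (m : ℝ) * ((m : ℝ) + 1) * t - (m : ℝ)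

variable {m : ℕ} {t : ℝ}

lemma lam_nonneg (ht2 : 1 ≤ ((m:ℝ)+1) * t) : 0 ≤ lam m t := by
  unfold lam
  nlinarith [Nat.cast_nonneg (α := ℝ) m]

lemma lam_le_one (hm : 1 ≤ m) (ht1 : (m:ℝ) * t ≤ 1) (ht2 : 1 ≤ ((m:ℝ)+1) * t) :
    lam m t ≤ 1 := by
  unfold lam
  have h1 : (1:ℝ) ≤ (m:ℝ) := by exact_mod_cast hm
  have ht0 : 0 ≤ t := by nlinarith
  nlinarith

lemma theta_lo (ht0 : 0 ≤ t) (ht1 : (m:ℝ) * t ≤ 1) {j : ℕ} (hj : j + 1 < m) :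
    theta (j+1) t = 0 := by
  unfold theta
  have hjm : ((j:ℝ)+1)+1 ≤ (m:ℝ) := by exact_mod_cast hj
  have e1 : ((j:ℝ)+1+1) * t ≤ (m:ℝ) * t := mul_le_mul_of_nonneg_right hjm ht0
  have e2 : ((j:ℝ)+1+1) * t ≤ 1 := le_trans e1 ht1
  have h : ((j+1:ℕ) : ℝ) * (((j+1:ℕ):ℝ) + 1) * t - ((j+1:ℕ):ℝ) ≤ 0 := by
    push_cast
    nlinarith [e2, Nat.cast_nonneg (α := ℝ) j, mul_nonneg (by positivity : (0:ℝ) ≤ (j:ℝ)+1) (sub_nonneg.2 e2)]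
  rw [max_eq_left h, min_eq_right (by norm_num)]

lemma theta_hi (ht0 : 0 ≤ t) (ht2 : 1 ≤ ((m:ℝ)+1) * t) {j : ℕ} (hj : m < j) :
    theta j t = 1 := by
  unfold theta
  have hjm : (m:ℝ)+1 ≤ (j:ℝ) := by exact_mod_cast hj
  have hjt : 1 ≤ (j:ℝ) * t := by nlinarith
  have h : 1 ≤ (j:ℝ) * ((j:ℝ) + 1) * t - (j:ℝ) := by nlinarith [Nat.cast_nonneg (α := ℝ) j]
  rw [max_eq_right (by linarith), min_eq_left (by linarith)]

lemma theta_mide : theta m t = min 1 (max 0 (lam m t)) := rfl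

lemma theta_mid (ht2 : 1 ≤ ((m:ℝ)+1) * t) (hm : 1 ≤ m) (ht1 : (m:ℝ) * t ≤ 1) :
    theta m t = lam m t := by
  rw [theta_mide, max_eq_right (lam_nonneg ht2), min_eq_right (lam_le_one hm ht1 ht2)]

lemma Hfun_piece (hs : ∀ w, w ∉ σ → f w = 0) (hm : 1 ≤ m) (ht0 : 0 ≤ t)
    (ht1 : (m:ℝ) * t ≤ 1) (ht2 : 1 ≤ ((m:ℝ)+1) * t) (v : ℤ × ℤ) :
    Hfun f t v = (1 - lam m t) * push m f v + lam m t * push (m-1) f v := by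
  set M := σ.sup nrm + m + 1 with hMdef
  have hM : ∀ w ∈ σ, nrm w ≤ M := fun w hw => le_trans (Finset.le_sup hw) (by omega)
  rw [Hfun_formula hs hM]
  have hsplit : Finset.range M = Finset.Ico 0 m ∪ Finset.Ico m M := by
    rw [Finset.range_eq_Ico]
    exact (Finset.Ico_union_Ico_eq_Ico (by omega) (by omega)).symm
  rw [hsplit, Finset.sum_union (by
    refine Finset.disjoint_left.2 ?_
    intro a ha hb
    simp only [Finset.mem_Ico] at ha hb
    omega)]
  have hlow : ∑ n ∈ Finset.Ico 0 m, theta (n+1) t * (push n f v - push (n+1) f v)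
      = lam m t * (push (m-1) f v - push m f v) := by
    rw [← Finset.range_eq_Ico]
    rw [Finset.sum_eq_single_of_mem (m-1) (Finset.mem_range.2 (by omega))]
    · have h1 : m - 1 + 1 = m := by omega
      rw [h1, theta_mid ht2 hm ht1]
    · intro n hn hne
      have : n < m - 1 := by
        have := Finset.mem_range.1 hn; omega
      rw [theta_lo ht0 ht1 (by omega)]
      ring
  have hhigh : ∑ n ∈ Finset.Ico m M, theta (n+1) t * (push n f v - push (n+1) f v)
      = push m f v - f v := by
    have : ∀ n ∈ Finset.Ico m M, theta (n+1) t * (push n f v - push (n+1) f v)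
        = push n f v - push (n+1) f v := by
      intro n hn
      have := (Finset.mem_Ico.1 hn).1
      rw [theta_hi ht0 ht2 (by omega)]
      ring
    rw [Finset.sum_congr rfl this, Finset.sum_Ico_eq_sum_range]
    have : ∀ i ∈ Finset.range (M - m), push (m + i) f v - push (m + i + 1) f v
        = (fun i => push (m + i) f v) i - (fun i => push (m + i) f v) (i + 1) := by
      intro i _
      have hi : m + i + 1 = m + (i + 1) := by omega
      rw [hi]
    rw [Finset.sum_congr rfl this, Finset.sum_range_sub' (fun i => push (m + i) f v)]
    have hMm : m + (M - m) = M := by omega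
    simp only [Nat.add_zero, hMm]
    rw [push_stab hs hM (le_refl M)]
  rw [hlow, hhigh]
  ring


lemma push_nonneg (hs : ∀ w, w ∉ σ → f w = 0) (hpos : ∀ w, 0 ≤ f w) (n : ℕ) (v : ℤ × ℤ) :
    0 ≤ push n f v := by
  rw [push_eq_sum hs]
  refine Finset.sum_nonneg ?_
  intro w _
  split_ifs
  · exact hpos w
  · exact le_refl 0

lemma push_vanish (hs : ∀ w, w ∉ σ → f w = 0) {n : ℕ} {v : ℤ × ℤ}
    (hv : v ∉ σ.image (psi n)) : push n f v = 0 := by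
  rw [push_eq_sum hs]
  refine Finset.sum_eq_zero ?_
  intro w hw
  rw [if_neg]
  intro h
  exact hv (Finset.mem_image.2 ⟨w, hw, h⟩)

lemma push_total (hs : ∀ w, w ∉ σ → f w = 0) {n : ℕ} {τ : Finset (ℤ × ℤ)}
    (hτ : σ.image (psi n) ⊆ τ) : ∑ v ∈ τ, push n f v = σ.sum f := by
  have : ∀ v ∈ τ, push n f v = ∑ w ∈ σ, if psi n w = v then f w else 0 :=
    fun v _ => push_eq_sum hs n v
  rw [Finset.sum_congr rfl this, Finset.sum_comm]
  refine Finset.sum_congr rfl ?_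
  intro w hw
  rw [Finset.sum_ite_eq τ (psi n w) (fun _ => f w),
    if_pos (hτ (Finset.mem_image.2 ⟨w, hw, rfl⟩))]

/-- The homotopy stays in the realization. -/
lemma Hmem {k : ℤ} (hk : 2 ≤ k) (f : ℤ × ℤ → ℝ)
    (hf : f ∈ Realization {σ : Finset (ℤ × ℤ) | IsVRSimplex dZ2 k σ})
    {t : ℝ} (ht0 : 0 ≤ t) (ht1 : t ≤ 1) :
    (fun v => Hfun f t v) ∈ Realization {σ : Finset (ℤ × ℤ) | IsVRSimplex dZ2 k σ} := by
  obtain ⟨σ, hσ, hout, hpos, hsum⟩ := hf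
  rcases eq_or_lt_of_le ht0 with h0 | h0
  · have : (fun v => Hfun f t v) = f := by
      funext v
      rw [← h0, Hfun_zero]
    rw [this]
    exact ⟨σ, hσ, hout, hpos, hsum⟩
  · -- t > 0 : find the interval index m
    set m := ⌊1/t⌋₊ with hmdef
    have hm : 1 ≤ m := by
      rw [hmdef]
      refine Nat.le_floor ?_
      rw [Nat.cast_one]
      exact one_le_one_div h0 ht1
    have htm1 : (m:ℝ) * t ≤ 1 := by
      have := Nat.floor_le (by positivity : (0:ℝ) ≤ 1/t)
      rw [← hmdef] at this
      calc (m:ℝ) * t ≤ (1/t) * t := by nlinarith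
        _ = 1 := by field_simp
    have htm2 : 1 ≤ ((m:ℝ)+1) * t := by
      have := Nat.lt_floor_add_one (1/t)
      rw [← hmdef] at this
      calc (1:ℝ) = (1/t) * t := by field_simp
        _ ≤ ((m:ℝ)+1) * t := by nlinarith
    have hl0 : 0 ≤ lam m t := lam_nonneg htm2
    have hl1 : lam m t ≤ 1 := lam_le_one hm htm1 htm2
    have hpiece : ∀ v, Hfun f t v
        = (1 - lam m t) * push m f v + lam m t * push (m-1) f v :=
      Hfun_piece hout hm ht0 htm1 htm2
    refine ⟨σ.image (psi m) ∪ σ.image (psi (m-1)), ?_, ?_, ?_, ?_⟩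
    · -- it is a VR simplex
      constructor
      · refine Finset.Nonempty.inl ?_
        exact hσ.1.image _
      · intro x hx y hy
        have hmm : m - 1 + 1 = m := by omega
        simp only [Finset.mem_union, Finset.mem_image] at hx hy
        rcases hx with ⟨a, ha, rfl⟩ | ⟨a, ha, rfl⟩ <;>
          rcases hy with ⟨b, hb, rfl⟩ | ⟨b, hb, rfl⟩
        · exact psi_dist hk (hσ.2 a ha b hb) m
        · rw [dZ2_comm, ← hmm]
          exact psi_cross hk (hσ.2 b hb a ha) (m-1)
        · rw [← hmm]
          exact psi_cross hk (hσ.2 a ha b hb) (m-1)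
        · exact psi_dist hk (hσ.2 a ha b hb) (m-1)
    · -- vanishing outside
      intro v hv
      simp only [Finset.mem_union, not_or] at hv
      show Hfun f t v = 0
      rw [hpiece v, push_vanish hout hv.1, push_vanish hout hv.2]
      ring
    · -- nonnegativity
      intro v
      show 0 ≤ Hfun f t v
      rw [hpiece v]
      have p1 := push_nonneg hout hpos m v
      have p2 := push_nonneg hout hpos (m-1) v
      nlinarith
    · -- total mass one
      rw [Finset.sum_congr rfl (fun v _ => hpiece v), Finset.sum_add_distrib,
        ← Finset.mul_sum, ← Finset.mul_sum,
        push_total hout Finset.subset_union_left,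
        push_total hout Finset.subset_union_right, hsum]
      ring


lemma key_supp {k : ℤ} {g : ℤ × ℤ → ℝ}
    (hg : g ∈ Realization {σ : Finset (ℤ × ℤ) | IsVRSimplex dZ2 k σ})
    {v₀ : ℤ × ℤ} (hv : 0 < g v₀) {w : ℤ × ℤ}
    (hw : w ∉ Finset.Icc (v₀.1 - k, v₀.2 - k) (v₀.1 + k, v₀.2 + k)) : g w = 0 := by
  obtain ⟨σ, hσ, hout, hpos, hsum⟩ := hg
  have hv₀σ : v₀ ∈ σ := by
    by_contra hc
    rw [hout v₀ hc] at hv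
    exact lt_irrefl 0 hv
  by_contra hne
  have hwσ : w ∈ σ := by
    by_contra hc
    exact hne (hout w hc)
  have hd := hσ.2 w hwσ v₀ hv₀σ
  simp only [dZ2] at hd
  have a1 : |w.1 - v₀.1| ≤ k := by have := abs_nonneg (w.2 - v₀.2); linarith
  have a2 : |w.2 - v₀.2| ≤ k := by have := abs_nonneg (w.1 - v₀.1); linarith
  obtain ⟨b1, b2⟩ := abs_le.1 a1
  obtain ⟨b3, b4⟩ := abs_le.1 a2
  refine hw ?_
  simp only [Finset.mem_Icc, Prod.le_def]
  refine ⟨⟨?_, ?_⟩, ?_, ?_⟩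
  · show v₀.1 - k ≤ w.1; linarith
  · show v₀.2 - k ≤ w.2; linarith
  · show w.1 ≤ v₀.1 + k; linarith
  · show w.2 ≤ v₀.2 + k; linarith

lemma theta_cont (n : ℕ) : Continuous fun t : ℝ => theta n t := by
  unfold theta
  fun_prop

lemma Hcont {k : ℤ} (hk : 2 ≤ k) :
    Continuous (fun z : ↥(Realization {σ : Finset (ℤ × ℤ) | IsVRSimplex dZ2 k σ}) × ↥unitInterval =>
      (fun v => Hfun (z.1 : (ℤ × ℤ) → ℝ) (z.2 : ℝ) v)) := by
  refine continuous_pi ?_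
  intro v
  rw [continuous_iff_continuousAt]
  rintro z₀
  obtain ⟨σ₀, hσ₀, hout₀, hpos₀, hsum₀⟩ := z₀.1.2
  obtain ⟨v₀, hv₀σ, hv₀⟩ := Finset.exists_ne_zero_of_sum_ne_zero
    (by rw [hsum₀]; exact one_ne_zero)
  have hv₀pos : 0 < (z₀.1 : (ℤ × ℤ) → ℝ) v₀ := lt_of_le_of_ne (hpos₀ v₀) (Ne.symm hv₀)
  set c := (z₀.1 : (ℤ × ℤ) → ℝ) v₀ / 2 with hc
  have hcpos : 0 < c := by positivity
  set B : Finset (ℤ × ℤ) := Finset.Icc (v₀.1 - k, v₀.2 - k) (v₀.1 + k, v₀.2 + k) with hB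
  set M := B.sup nrm with hM
  have hMB : ∀ w ∈ B, nrm w ≤ M := fun w hw => Finset.le_sup hw
  have heval : Continuous (fun z : ↥(Realization {σ : Finset (ℤ × ℤ) | IsVRSimplex dZ2 k σ}) × ↥unitInterval =>
      (z.1 : (ℤ × ℤ) → ℝ)) := continuous_subtype_val.comp continuous_fst
  have hGcont : Continuous (fun z : ↥(Realization {σ : Finset (ℤ × ℤ) | IsVRSimplex dZ2 k σ}) × ↥unitInterval =>
      (z.1 : (ℤ × ℤ) → ℝ) v + ∑ n ∈ Finset.range M, theta (n+1) (z.2 : ℝ) *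
        ((∑ w ∈ B, if psi n w = v then (z.1 : (ℤ × ℤ) → ℝ) w else 0) -
         (∑ w ∈ B, if psi (n+1) w = v then (z.1 : (ℤ × ℤ) → ℝ) w else 0))) := by
    have hsumc : ∀ n : ℕ, Continuous (fun z : ↥(Realization {σ : Finset (ℤ × ℤ) | IsVRSimplex dZ2 k σ}) × ↥unitInterval =>
        (∑ w ∈ B, if psi n w = v then (z.1 : (ℤ × ℤ) → ℝ) w else 0)) := by
      intro n
      refine continuous_finset_sum _ ?_
      intro w _
      split_ifs
      · exact (continuous_apply w).comp heval
      · exact continuous_const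
    refine ((continuous_apply v).comp heval).add ?_
    refine continuous_finset_sum _ ?_
    intro n _
    exact ((theta_cont (n+1)).comp (continuous_subtype_val.comp continuous_snd)).mul
      ((hsumc n).sub (hsumc (n+1)))
  refine hGcont.continuousAt.congr ?_
  have hopen : IsOpen {z : ↥(Realization {σ : Finset (ℤ × ℤ) | IsVRSimplex dZ2 k σ}) × ↥unitInterval |
      c < (z.1 : (ℤ × ℤ) → ℝ) v₀} := isOpen_Ioi.preimage ((continuous_apply v₀).comp heval)
  have hz₀mem : z₀ ∈ {z : ↥(Realization {σ : Finset (ℤ × ℤ) | IsVRSimplex dZ2 k σ}) × ↥unitInterval |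
      c < (z.1 : (ℤ × ℤ) → ℝ) v₀} := by
    show c < _
    rw [hc]
    exact half_lt_self hv₀pos
  refine Filter.eventuallyEq_of_mem (hopen.mem_nhds hz₀mem) ?_
  intro z hz
  have hzpos : 0 < (z.1 : (ℤ × ℤ) → ℝ) v₀ := lt_trans hcpos hz
  have hsupp : ∀ w, w ∉ B → (z.1 : (ℤ × ℤ) → ℝ) w = 0 := by
    intro w hw
    exact key_supp z.1.2 hzpos hw
  have hp : ∀ n : ℕ, push n (z.1 : (ℤ × ℤ) → ℝ) v
      = ∑ w ∈ B, if psi n w = v then (z.1 : (ℤ × ℤ) → ℝ) w else 0 :=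
    fun n => push_eq_sum hsupp n v
  show _ = Hfun (↑z.1 : (ℤ × ℤ) → ℝ) (↑z.2 : ℝ) v
  rw [Hfun_formula hsupp hMB]
  simp only [hp]

end VRZ2

open VRZ2 in
theorem stmt3 (k : ℤ) (hk : 2 ≤ k) :
    ContractibleSpace ↥(Realization {σ : Finset (ℤ × ℤ) | IsVRSimplex dZ2 k σ}) := by
  rw [contractible_iff_id_nullhomotopic]
  have hδmem : (fun v : ℤ × ℤ => if v = ((0:ℤ),(0:ℤ)) then (1:ℝ) else 0)
      ∈ Realization {σ : Finset (ℤ × ℤ) | IsVRSimplex dZ2 k σ} := by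
    refine ⟨{((0:ℤ),(0:ℤ))}, ⟨Finset.singleton_nonempty _, ?_⟩, ?_, ?_, ?_⟩
    · intro x hx y hy
      rw [Finset.mem_singleton] at hx hy
      subst hx; subst hy
      simp only [dZ2, sub_self, abs_zero, add_zero]
      omega
    · intro v hv
      rw [Finset.mem_singleton] at hv
      show (if v = ((0:ℤ),(0:ℤ)) then (1:ℝ) else 0) = 0
      rw [if_neg hv]
    · intro v
      show (0:ℝ) ≤ if v = ((0:ℤ),(0:ℤ)) then (1:ℝ) else 0
      split_ifs
      · norm_num
      · exact le_refl 0
    · rw [Finset.sum_singleton]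
      norm_num
  refine ⟨⟨_, hδmem⟩, ⟨?_⟩⟩
  exact
    { toContinuousMap := ⟨fun z => ⟨fun v => Hfun (z.2 : (ℤ × ℤ) → ℝ) (z.1 : ℝ) v,
        Hmem hk _ z.2.2 z.1.2.1 z.1.2.2⟩, (Hcont hk).comp continuous_swap |>.subtype_mk _⟩
      map_zero_left := fun x => by
        apply Subtype.ext
        funext v
        show Hfun (↑x) 0 v = _
        rw [Hfun_zero]
        rfl
      map_one_left := fun x => by
        apply Subtype.ext
        funext v
        obtain ⟨σ, hσ, hout, hpos, hsum⟩ := x.2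
        show Hfun (↑x) 1 v = _
        rw [Hfun_one hout hsum]
        rfl }
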